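/- Let C be a C-logics on L. For every A ⊆ L, C(A) = Cn(C(A)) and C(A) = C(Cn(A)). -/
import Mathlib

/-- `Cn C A` is the intersection of all theories of `C` that include `A`. -/
def Cn {L : Type*} (C : Set L → Set L) (A : Set L) : Set L :=
  ⋂₀ {T : Set L | A ⊆ T ∧ C T = T}

/-- For a C-logics, `C(A) = Cn(C(A))` and `C(A) = C(Cn(A))`. -/
theorem stmt_6 {L : Type*} [Nonempty L] (C : Set L → Set L)
    (hIncl : ∀ A : Set L, A ⊆ C A)
    (hCum : ∀ A B : Set L, A ⊆ B → B ⊆ C A → C A = C B)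
    (A : Set L) :
    C A = Cn C (C A) ∧ C A = C (Cn C A) := by
  have hidem : C (C A) = C A := (hCum A (C A) (hIncl A) subset_rfl).symm
  constructor
  · apply subset_antisymm
    · intro x hx T hT
      exact hT.1 hx
    · exact Set.sInter_subset_of_mem ⟨subset_rfl, hidem⟩
  · have hsub : Cn C A ⊆ C A := Set.sInter_subset_of_mem ⟨hIncl A, hidem⟩
    have hsub2 : A ⊆ Cn C A := fun x hx T hT => hT.1 hx
    exact hCum A (Cn C A) hsub2 hsub
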